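/- Let a>0, and let A_j(z)=aR_j/(z²−a²)+2 for j=0,…,n and B_n(z)=z r_n/(z²−a²). Suppose the identity Σ_{j=0}^{n−1}A_j(z) + B_n(z)² + 2z·B_n(z) = β_n A_n(z)A_{n−1}(z) holds for all z with z²≠a². Then the following three relations hold: (i) r_n² = β_n R_n R_{n−1}; (ii) aΣ_{j=0}^{n−1}R_j + r_n² + 2a²r_n = 2aβ_n(R_n+R_{n−1}); (iii) 2β_n = n + r_n. -/

import Mathlib

/-- Extracting partial-fraction coefficients from the identity (S2') with the
explicit rational functions `A_j` and `B_n` yields the three relations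
(i) `r_n² = β_n R_n R_{n-1}`, (ii) `a ∑ R_j + r_n² + 2a² r_n = 2aβ_n(R_n+R_{n-1})`,
(iii) `2β_n = n + r_n`. -/
theorem partial_fraction_relations (a : ℝ) (ha : 0 < a) (n : ℕ) (hn : 1 ≤ n)
    (R : ℕ → ℝ) (rn βn : ℝ)
    (h : ∀ z : ℝ, z ^ 2 ≠ a ^ 2 →
      ∑ j ∈ Finset.range n, (a * R j / (z ^ 2 - a ^ 2) + 2)
        + (z * rn / (z ^ 2 - a ^ 2)) ^ 2
        + 2 * z * (z * rn / (z ^ 2 - a ^ 2))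
      = βn * (a * R n / (z ^ 2 - a ^ 2) + 2)
          * (a * R (n - 1) / (z ^ 2 - a ^ 2) + 2)) :
    rn ^ 2 = βn * R n * R (n - 1)
      ∧ a * ∑ j ∈ Finset.range n, R j + rn ^ 2 + 2 * a ^ 2 * rn
          = 2 * a * βn * (R n + R (n - 1))
      ∧ 2 * βn = n + rn := by
  have hS : ∀ z : ℝ, (∑ j ∈ Finset.range n, (a * R j / (z ^ 2 - a ^ 2) + 2))
      = a * (∑ j ∈ Finset.range n, R j) / (z ^ 2 - a ^ 2) + 2 * n := by
    intro z
    rw [Finset.sum_add_distrib, Finset.sum_const, Finset.card_range,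
      Finset.mul_sum, Finset.sum_div]
    push_cast; ring
  set S := ∑ j ∈ Finset.range n, R j with hSdef
  set N := (n : ℝ)
  set P := R n
  set Q := R (n - 1)
  have key : ∀ z : ℝ, z ^ 2 ≠ a ^ 2 →
      (a * S + 2 * N * (z^2 - a^2)) * (z^2 - a^2) + z^2 * rn^2 + 2 * z^2 * rn * (z^2 - a^2)
      = βn * (a * P + 2 * (z^2 - a^2)) * (a * Q + 2 * (z^2 - a^2)) := by
    intro z hz
    have hD : z ^ 2 - a ^ 2 ≠ 0 := sub_ne_zero.mpr hz
    have hthis := h z hz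
    rw [hS] at hthis
    field_simp at hthis
    apply mul_right_cancel₀ (pow_ne_zero 4 hD)
    linear_combination (z ^ 2 - a ^ 2) ^ 4 * hthis
  have ha2 : a ^ 2 ≠ 0 := pow_ne_zero 2 ha.ne'
  have h0 := key 0 (by simpa using (by positivity : (0:ℝ) < a^2).ne)
  have h2 := key (2 * a) (by intro hEq; nlinarith)
  have h3 := key (3 * a) (by intro hEq; nlinarith)
  refine ⟨?_, ?_, ?_⟩
  · have e0 : a ^ 2 * rn ^ 2 = a ^ 2 * (βn * P * Q) := by
      linear_combination (10 * h0 + 6 * h2 - h3) / 15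
    exact mul_left_cancel₀ ha2 e0
  · have e1 : a ^ 2 * (a * S + rn ^ 2 + 2 * a ^ 2 * rn)
        = a ^ 2 * (2 * a * βn * (P + Q)) := by
      linear_combination (-55 * h0 + 63 * h2 - 8 * h3) / 180
    exact mul_left_cancel₀ ha2 e1
  · have ha4 : a ^ 4 ≠ 0 := pow_ne_zero 4 ha.ne'
    have e2 : a ^ 4 * (2 * βn) = a ^ 4 * (N + rn) := by
      linear_combination -(5 * h0 - 9 * h2 + 4 * h3) / 360
    exact mul_left_cancel₀ ha4 e2
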